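/- Let G be a connected finite simple graph, c ∈ V(G), and C = [c]_R the R-class of c where x R y iff N(x) = N(y). Suppose a(x) = k₁ and b(x) = k₂ for all x ∈ C, where k₁, k₂ > 0. With G', a', b' defined as in the R-reduction (delete C ∖ {c}, and set a'(c) = k₁|C|, b'(c) = k₂|C|), it holds that W(G,a,b) = W(G',a',b') + 2 k₁ k₂ |C| (|C| - 1). -/

import Mathlib

open Finset
open scoped Classical

noncomputable section

variable {V : Type*}

noncomputable def SimpleGraph.wienerDW [Fintype V] (G : SimpleGraph V) (a b : V → ℝ) : ℝ :=
  (1 / 2) * ∑ u : V, ∑ v : V, (a u * b v + a v * b u) * (G.dist u v : ℝ)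

section WienerAux

variable {G : SimpleGraph V}

lemma twin_dist_le' (hG : G.Connected) {p c q : V}
    (h : G.neighborSet p = G.neighborSet c) (hpq : p ≠ q) :
    G.dist c q ≤ G.dist p q := by
  obtain ⟨w, hw⟩ := hG.exists_walk_length_eq_dist p q
  cases w with
  | nil => exact absurd rfl hpq
  | @cons _ x _ hadj w' =>
      have hx : G.Adj c x := by
        have hx' : x ∈ G.neighborSet c := h ▸ hadj
        exact hx'
      calc G.dist c q ≤ (SimpleGraph.Walk.cons hx w').length := SimpleGraph.dist_le _
        _ = G.dist p q := by rw [← hw]; simp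

lemma twin_dist_eq' (hG : G.Connected) {p c q : V}
    (h : G.neighborSet p = G.neighborSet c) (hpq : p ≠ q) (hcq : c ≠ q) :
    G.dist p q = G.dist c q :=
  le_antisymm (twin_dist_le' hG h.symm hcq) (twin_dist_le' hG h hpq)

lemma twin_dist_two' (hG : G.Connected) {p q : V}
    (h : G.neighborSet p = G.neighborSet q) (hpq : p ≠ q) :
    G.dist p q = 2 := by
  have hnadj : ¬ G.Adj p q := by
    intro had
    have h1 : q ∈ G.neighborSet p := had
    rw [h] at h1
    exact G.irrefl h1
  have hne : G.dist p q ≠ 0 := by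
    rw [Ne, hG.dist_eq_zero_iff]; exact hpq
  have h1 : G.dist p q ≠ 1 := by
    rw [Ne, SimpleGraph.dist_eq_one_iff_adj]; exact hnadj
  obtain ⟨w, hw⟩ := hG.exists_walk_length_eq_dist p q
  cases w with
  | nil => exact absurd rfl hpq
  | @cons _ x _ hadj w' =>
      have hx : G.Adj q x := by
        have hx' : x ∈ G.neighborSet p := hadj
        rw [h] at hx'
        exact hx'
      have hle : G.dist p q ≤ 2 := by
        have := SimpleGraph.dist_le
          (SimpleGraph.Walk.cons hadj (SimpleGraph.Walk.cons hx.symm SimpleGraph.Walk.nil))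
        simpa using this
      omega

lemma induce_dist' (hG : G.Connected) {c : V} {C s : Set V}
    (hC : C = {x : V | G.neighborSet x = G.neighborSet c})
    (hs : s = {x : V | x ∉ C} ∪ {c}) (hcs : c ∈ s)
    (u v : s) : (G.induce s).dist u v = G.dist (u : V) (v : V) := by
  classical
  have hcC : c ∈ C := by rw [hC]; exact rfl
  have hN : ∀ x ∈ C, G.neighborSet x = G.neighborSet c := fun x hx => by
    rw [hC] at hx; exact hx
  have hs' : ∀ x : V, x ∈ s ↔ (x ∉ C ∨ x = c) := fun x => by rw [hs]; simp; tauto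
  have hmem : ∀ x, x ∉ C → x ∈ s := fun x hx => (hs' x).mpr (Or.inl hx)
  have hadjc : ∀ {x y : V}, x ∈ C → G.Adj x y → G.Adj c y := by
    intro x y hx hxy
    have : y ∈ G.neighborSet c := by rw [← hN x hx]; exact hxy
    exact this
  have hΦadj : ∀ {p q : V}, G.Adj p q → (G.induce s).Adj
      (if h : p ∈ C then (⟨c, hcs⟩ : s) else ⟨p, hmem p h⟩)
      (if h : q ∈ C then (⟨c, hcs⟩ : s) else ⟨q, hmem q h⟩) := by
    intro p q hpq
    by_cases hp : p ∈ C <;> by_cases hq : q ∈ C <;>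
      simp only [dif_pos, dif_neg, hp, hq, SimpleGraph.comap_adj, Function.Embedding.coe_subtype]
    · have h1 : G.Adj c q := hadjc hp hpq
      have h2 : G.Adj c c := by
        have h3 : c ∈ G.neighborSet q := h1.symm
        rwa [hN q hq] at h3
      exact (G.irrefl h2).elim
    · exact hadjc hp hpq
    · exact (hadjc hq hpq.symm).symm
    · exact hpq
  let Φ : G →g G.induce s :=
    ⟨fun x => if h : x ∈ C then (⟨c, hcs⟩ : s) else ⟨x, hmem x h⟩, fun h => hΦadj h⟩
  have hΦfix : ∀ w : s, Φ (w : V) = w := by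
    intro w
    rcases (hs' (w : V)).mp w.2 with hw | hw
    · show dite _ _ _ = w
      rw [dif_neg hw]
    · show dite _ _ _ = w
      rw [dif_pos (hw ▸ hcC)]
      exact Subtype.ext hw.symm
  let ι : G.induce s →g G := ⟨Subtype.val, fun h => h⟩
  apply le_antisymm
  · obtain ⟨w, hw⟩ := hG.exists_walk_length_eq_dist (u : V) (v : V)
    have hle := SimpleGraph.dist_le ((w.map Φ).copy (hΦfix u) (hΦfix v))
    simpa [SimpleGraph.Walk.length_copy, SimpleGraph.Walk.length_map, hw] using hle
  · have hreach : (G.induce s).Reachable u v := by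
      have hr := (hG.preconnected (u : V) (v : V)).map Φ
      rwa [hΦfix u, hΦfix v] at hr
    obtain ⟨w, hw⟩ := hreach.exists_walk_length_eq_dist
    have hle := SimpleGraph.dist_le (w.map ι)
    simp only [SimpleGraph.Walk.length_map, hw] at hle
    exact hle

lemma sum2_coe_set' {α : Type*} [Fintype α] (s : Set α) (f : α → α → ℝ) :
    (∑ x : s, ∑ y : s, f x y) = ∑ x ∈ s.toFinset, ∑ y ∈ s.toFinset, f x y := by
  rw [Finset.sum_set_coe (f := fun x => ∑ y : s, f x y)]
  exact Finset.sum_congr rfl fun x _ => Finset.sum_set_coe (f := fun y => f x y) s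

lemma sum_decomp' {α : Type*} [Fintype α] (Cf : Finset α) (c : α) (hc : c ∈ Cf)
    (T g : α → α → ℝ) (κ : ℝ)
    (hTg : ∀ p ∈ Cfᶜ, ∀ q ∈ Cfᶜ, T p q = g p q)
    (hgc : ∀ q ∈ Cfᶜ, g c q = ∑ p ∈ Cf, T p q)
    (hgc' : ∀ p ∈ Cfᶜ, g p c = ∑ q ∈ Cf, T p q)
    (hgcc : g c c = 0)
    (hTC : ∀ p ∈ Cf, ∀ q ∈ Cf, T p q = if p = q then 0 else κ) :
    ∑ p : α, ∑ q : α, T p q =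
      (∑ p ∈ insert c Cfᶜ, ∑ q ∈ insert c Cfᶜ, g p q) +
        (Cf.card : ℝ) * ((Cf.card : ℝ) - 1) * κ := by
  classical
  have hcc : c ∉ Cfᶜ := by simp [hc]
  have hE : ∑ p ∈ Cf, ∑ q ∈ Cf, T p q = (Cf.card : ℝ) * ((Cf.card : ℝ) - 1) * κ := by
    have hinner : ∀ p ∈ Cf, ∑ q ∈ Cf, T p q = (Cf.card : ℝ) * κ - κ := by
      intro p hp
      calc ∑ q ∈ Cf, T p q = ∑ q ∈ Cf, (κ - if p = q then κ else 0) := by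
            refine Finset.sum_congr rfl fun q hq => ?_
            rw [hTC p hp q hq]; by_cases h : p = q <;> simp [h]
        _ = (Cf.card : ℝ) * κ - κ := by
            rw [Finset.sum_sub_distrib, Finset.sum_const,
              Finset.sum_ite_eq Cf p (fun _ => κ), if_pos hp, nsmul_eq_mul]
    rw [Finset.sum_congr rfl hinner, Finset.sum_const, nsmul_eq_mul]
    ring
  have key : ∀ S : Finset α, ∑ p ∈ S, ∑ q : α, T p q
      = ∑ p ∈ S, (∑ q ∈ Cfᶜ, T p q + ∑ q ∈ Cf, T p q) :=
    fun S => Finset.sum_congr rfl fun p _ => (Finset.sum_compl_add_sum Cf (T p)).symm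
  have r1 : ∑ p ∈ Cfᶜ, ∑ q ∈ Cfᶜ, T p q = ∑ p ∈ Cfᶜ, ∑ q ∈ Cfᶜ, g p q :=
    Finset.sum_congr rfl fun p hp => Finset.sum_congr rfl fun q hq => hTg p hp q hq
  have r2 : ∑ p ∈ Cfᶜ, ∑ q ∈ Cf, T p q = ∑ p ∈ Cfᶜ, g p c :=
    Finset.sum_congr rfl fun p hp => (hgc' p hp).symm
  have r3 : ∑ p ∈ Cf, ∑ q ∈ Cfᶜ, T p q = ∑ q ∈ Cfᶜ, g c q := by
    rw [Finset.sum_comm]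
    exact Finset.sum_congr rfl fun q hq => (hgc q hq).symm
  rw [← Finset.sum_compl_add_sum Cf (fun p => ∑ q : α, T p q), key, key,
    Finset.sum_add_distrib, Finset.sum_add_distrib, r1, r2, r3, hE,
    Finset.sum_insert hcc]
  have hins : ∀ p, ∑ q ∈ insert c Cfᶜ, g p q = g p c + ∑ q ∈ Cfᶜ, g p q :=
    fun p => Finset.sum_insert hcc
  rw [Finset.sum_congr rfl fun p _ => hins p, hins c, hgcc, Finset.sum_add_distrib]
  ring

end WienerAux

/-- Let `G` be connected, `c ∈ V(G)`, `C = [c]_R` the class of `c` for the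
relation `x R y ↔ N(x) = N(y)`, and suppose `a ≡ k₁`, `b ≡ k₂` on `C` with `k₁, k₂ > 0`.
With `G' = G ∖ (C ∖ {c})` and `a'(c) = k₁|C|`, `b'(c) = k₂|C|` (and `a' = a`, `b' = b` elsewhere),
`W(G,a,b) = W(G',a',b') + 2 k₁ k₂ |C| (|C| − 1)`. -/
theorem wienerDW_reduction_const [Fintype V] (G : SimpleGraph V) (hG : G.Connected)
    (a b : V → ℝ) (ha : ∀ v, 0 < a v) (hb : ∀ v, 0 < b v) (c : V)
    (C : Set V) (hC : C = {x : V | G.neighborSet x = G.neighborSet c})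
    (k₁ k₂ : ℝ) (hk₁ : 0 < k₁) (hk₂ : 0 < k₂)
    (hak : ∀ x ∈ C, a x = k₁) (hbk : ∀ x ∈ C, b x = k₂)
    (s : Set V) (hs : s = {x : V | x ∉ C} ∪ {c})
    (hcs : c ∈ s)
    (a' b' : s → ℝ)
    (ha' : ∀ x : s, a' x = if (x : V) = c then k₁ * C.toFinset.card else a (x : V))
    (hb' : ∀ x : s, b' x = if (x : V) = c then k₂ * C.toFinset.card else b (x : V)) :
    G.wienerDW a b = (G.induce s).wienerDW a' b' +
      2 * k₁ * k₂ * C.toFinset.card * (C.toFinset.card - 1) := by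
  classical
  have hcC : c ∈ C := by rw [hC]; exact rfl
  have hN : ∀ x ∈ C, G.neighborSet x = G.neighborSet c := fun x hx => by
    rw [hC] at hx; exact hx
  set Cf := C.toFinset with hCfdef
  have hmemCf : ∀ x : V, x ∈ Cf ↔ x ∈ C := fun x => Set.mem_toFinset
  have hcCf : c ∈ Cf := (hmemCf c).mpr hcC
  -- distance facts
  have hd2 : ∀ p ∈ Cf, ∀ q ∈ Cf, p ≠ q → G.dist p q = 2 := by
    intro p hp q hq hpq
    exact twin_dist_two' hG
      ((hN p ((hmemCf p).mp hp)).trans (hN q ((hmemCf q).mp hq)).symm) hpq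
  have hdc : ∀ p ∈ C, ∀ q, q ∉ C → G.dist p q = G.dist c q := by
    intro p hp q hq
    have hcq : c ≠ q := fun h => hq (h ▸ hcC)
    have hpq : p ≠ q := fun h => hq (h ▸ hp)
    exact twin_dist_eq' hG (hN p hp) hpq hcq
  have hsF : s.toFinset = insert c Cfᶜ := by
    ext x
    simp only [Set.mem_toFinset, hs, Set.mem_union, Set.mem_setOf_eq, Set.mem_singleton_iff,
      Finset.mem_insert, Finset.mem_compl, hmemCf]
    tauto
  -- rewrite the reduced Wiener sum
  have hdI : ∀ u v : s, (((G.induce s).dist u v : ℕ) : ℝ) = ((G.dist (u : V) (v : V) : ℕ) : ℝ) :=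
    fun u v => congrArg (Nat.cast : ℕ → ℝ) (induce_dist' hG hC hs hcs u v)
  have hW' : (G.induce s).wienerDW a' b' = (1 / 2) * ∑ p ∈ s.toFinset, ∑ q ∈ s.toFinset,
      ((if p = c then k₁ * (Cf.card : ℝ) else a p) * (if q = c then k₂ * (Cf.card : ℝ) else b q) +
       (if q = c then k₁ * (Cf.card : ℝ) else a q) * (if p = c then k₂ * (Cf.card : ℝ) else b p)) *
        (G.dist p q : ℝ) := by
    rw [SimpleGraph.wienerDW]
    congr 1
    simp only [ha', hb', hdI]
    exact sum2_coe_set' s (fun p q =>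
      ((if p = c then k₁ * (Cf.card : ℝ) else a p) * (if q = c then k₂ * (Cf.card : ℝ) else b q) +
       (if q = c then k₁ * (Cf.card : ℝ) else a q) * (if p = c then k₂ * (Cf.card : ℝ) else b p)) *
        (G.dist p q : ℝ))
  have e : (∑ u : V, ∑ v : V, (a u * b v + a v * b u) * (G.dist u v : ℝ)) =
      (∑ p ∈ insert c Cfᶜ, ∑ q ∈ insert c Cfᶜ,
        ((if p = c then k₁ * (Cf.card : ℝ) else a p) * (if q = c then k₂ * (Cf.card : ℝ) else b q) +
         (if q = c then k₁ * (Cf.card : ℝ) else a q) * (if p = c then k₂ * (Cf.card : ℝ) else b p)) *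
          (G.dist p q : ℝ)) +
        (Cf.card : ℝ) * ((Cf.card : ℝ) - 1) * (4 * (k₁ * k₂)) := by
    refine sum_decomp' Cf c hcCf _ _ _ ?_ ?_ ?_ ?_ ?_
    · -- off-class entries agree
      intro p hp q hq
      rw [Finset.mem_compl, hmemCf] at hp hq
      have hpc : p ≠ c := fun h => hp (h ▸ hcC)
      have hqc : q ≠ c := fun h => hq (h ▸ hcC)
      rw [if_neg hpc, if_neg hqc, if_neg hqc, if_neg hpc]
    · -- column at c
      intro q hq
      rw [Finset.mem_compl, hmemCf] at hq
      have hqc : q ≠ c := fun h => hq (h ▸ hcC)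
      have : ∀ p ∈ Cf, (a p * b q + a q * b p) * (G.dist p q : ℝ)
          = (k₁ * b q + a q * k₂) * (G.dist c q : ℝ) := by
        intro p hp
        rw [hmemCf] at hp
        rw [hak p hp, hbk p hp, hdc p hp q hq]
      rw [Finset.sum_congr rfl this, Finset.sum_const, nsmul_eq_mul,
        if_pos rfl, if_pos rfl, if_neg hqc, if_neg hqc]
      ring
    · -- row at c
      intro p hp
      rw [Finset.mem_compl, hmemCf] at hp
      have hpc : p ≠ c := fun h => hp (h ▸ hcC)
      have : ∀ q ∈ Cf, (a p * b q + a q * b p) * (G.dist p q : ℝ)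
          = (a p * k₂ + k₁ * b p) * (G.dist p c : ℝ) := by
        intro q hq
        rw [hmemCf] at hq
        have hd : G.dist p q = G.dist p c := by
          rw [SimpleGraph.dist_comm, hdc q hq p hp, SimpleGraph.dist_comm]
        rw [hak q hq, hbk q hq, hd]
      rw [Finset.sum_congr rfl this, Finset.sum_const, nsmul_eq_mul,
        if_pos rfl, if_pos rfl, if_neg hpc, if_neg hpc]
      ring
    · simp [SimpleGraph.dist_self]
    · intro p hp q hq
      by_cases h : p = q
      · subst h; simp [SimpleGraph.dist_self]
      · rw [if_neg h, hmemCf] at *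
        rw [hak p hp, hbk p hp, hak q hq, hbk q hq, hd2 p ((hmemCf p).mpr hp) q ((hmemCf q).mpr hq) h]
        norm_num
        ring
  rw [hW', hsF, SimpleGraph.wienerDW, e]
  ring


end
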